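/- arXiv:1404.5177 — 5 statements merged into one kernel-verified Lean document; each statement's English description precedes it below -/
import Mathlib

section
/- Let R = k[x,y] with Poisson bracket {f,g} = (∂f/∂x ∂g/∂y − ∂f/∂y ∂g/∂x)h for a fixed h ∈ k[x,y], char k = 0. If the modular derivation φ (given by φ(f) = ∂{f,x}/∂x + ∂{f,y}/∂y) is a Hamiltonian derivation, i.e. φ = {g,-} for some g ∈ R, then h is a constant in k. -/
open MvPolynomial

lemma descFactorial_succ'' (m n : ℕ) :
    m.descFactorial (n+1) = m * (m-1).descFactorial n := by
  cases m with
  | zero => simp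
  | succ m => rw [Nat.succ_descFactorial_succ]; simp

lemma iter_pderiv_monomial' {k : Type*} [CommSemiring k] {σ : Type*} [DecidableEq σ]
    (i : σ) (n : ℕ) (s : σ →₀ ℕ) (a : k) :
    (pderiv i)^[n] (monomial s a) =
      monomial (s - Finsupp.single i n) (a * (s i).descFactorial n) := by
  induction n generalizing s a with
  | zero => simp
  | succ n ih =>
    rw [Function.iterate_succ_apply, pderiv_monomial, ih]
    congr 1
    · rw [tsub_tsub, ← Finsupp.single_add, add_comm]
    · rw [Finsupp.tsub_apply, Finsupp.single_eq_same, descFactorial_succ'', Nat.cast_mul]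
      ring

lemma iter_pderiv_sum' {k : Type*} [CommSemiring k] {σ : Type*} {β : Type*}
    (i : σ) (n : ℕ) (s : Finset β) (f : β → MvPolynomial σ k) :
    (pderiv i)^[n] (∑ x ∈ s, f x) = ∑ x ∈ s, (pderiv i)^[n] (f x) := by
  induction n generalizing f with
  | zero => simp
  | succ n ih =>
    rw [Function.iterate_succ_apply, map_sum, ih]
    simp [Function.iterate_succ_apply]

lemma dvd_pderiv_of_dvd {k : Type*} [CommSemiring k] {σ : Type*}
    {h q : MvPolynomial σ k} (i : σ) (hh : h ∣ pderiv i h) (hq : h ∣ q) :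
    h ∣ pderiv i q := by
  obtain ⟨r, rfl⟩ := hq
  rw [pderiv_mul]
  exact dvd_add (hh.mul_right r) (dvd_mul_right h _)

lemma dvd_iter_pderiv {k : Type*} [CommSemiring k] {σ : Type*}
    {h p : MvPolynomial σ k} (i : σ) (hh : h ∣ pderiv i h) (n : ℕ) (hp : h ∣ p) :
    h ∣ (pderiv i)^[n] p := by
  induction n with
  | zero => simpa
  | succ n ih => rw [Function.iterate_succ_apply']; exact dvd_pderiv_of_dvd i hh ih

lemma max_deriv_const {k : Type*} [Field k] [CharZero k]
    (h : MvPolynomial (Fin 2) k) (α : Fin 2 →₀ ℕ) (hmem : α ∈ h.support)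
    (hmax : ∀ b ∈ h.support, ¬ α < b) :
    ∃ c' : k, c' ≠ 0 ∧ (pderiv 0)^[α 0] ((pderiv 1)^[α 1] h) = C c' := by
  refine ⟨coeff α h * (α 1).descFactorial (α 1) * (α 0).descFactorial (α 0), ?_, ?_⟩
  · have h1 := MvPolynomial.mem_support_iff.mp hmem
    simp [Nat.descFactorial_self, Nat.factorial_ne_zero, h1]
  · conv_lhs => rw [h.as_sum]
    rw [iter_pderiv_sum', Finset.sum_congr rfl
      (fun s _ => by rw [iter_pderiv_monomial']), iter_pderiv_sum',
      Finset.sum_congr rfl (fun s _ => by rw [iter_pderiv_monomial'])]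
    rw [Finset.sum_eq_single_of_mem α hmem]
    · have hexp : α - Finsupp.single 1 (α 1) - Finsupp.single 0 (α 0) = 0 := by
        ext i
        fin_cases i <;>
          simp [Finsupp.tsub_apply, Finsupp.single_apply]
      have h01 : (α - Finsupp.single 1 (α 1) : Fin 2 →₀ ℕ) 0 = α 0 := by
        rw [Finsupp.tsub_apply, Finsupp.single_apply]
        simp
      rw [hexp, h01, monomial_zero']
    · intro b hb hne
      have hb0 : (b - Finsupp.single 1 (α 1) : Fin 2 →₀ ℕ) 0 = b 0 := by
        rw [Finsupp.tsub_apply, Finsupp.single_apply]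
        simp
      by_cases hle : α 0 ≤ b 0 ∧ α 1 ≤ b 1
      · exfalso
        apply hmax b hb
        refine lt_of_le_of_ne ?_ (fun e => hne e.symm)
        intro i
        fin_cases i
        · exact hle.1
        · exact hle.2
      · rw [not_and_or] at hle
        rcases hle with hl | hl
        · rw [hb0, (Nat.descFactorial_eq_zero_iff_lt).mpr (Nat.lt_of_not_le hl)]
          simp
        · rw [(Nat.descFactorial_eq_zero_iff_lt).mpr (Nat.lt_of_not_le hl)]
          simp

lemma isUnit_eq_C {k : Type*} [Field k] {h : MvPolynomial (Fin 2) k}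
    (hu : IsUnit h) : ∃ c : k, h = C c := by
  have h1 : IsUnit (finSuccEquiv k 1 h) := hu.map (finSuccEquiv k 1)
  rw [Polynomial.isUnit_iff] at h1
  obtain ⟨r, hr, hrh⟩ := h1
  have h2 : IsUnit (finSuccEquiv k 0 r) := hr.map (finSuccEquiv k 0)
  rw [Polynomial.isUnit_iff] at h2
  obtain ⟨r0, _, hr0r⟩ := h2
  obtain ⟨c, rfl⟩ : ∃ c : k, r0 = C c := ⟨r0.coeff 0, r0.eq_C_of_isEmpty⟩
  have hr' : r = C c := by
    refine (finSuccEquiv k 0).injective ?_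
    rw [← hr0r]
    simp [finSuccEquiv_apply, eval₂Hom_C]
  refine ⟨c, (finSuccEquiv k 1).injective ?_⟩
  rw [← hrh, hr']
  simp [finSuccEquiv_apply, eval₂Hom_C]

/-- On R = k[x,y] with bracket {f,g} = (∂_x f ∂_y g − ∂_y f ∂_x g)·h,
if the modular derivation φ(f) = ∂{f,x}/∂x + ∂{f,y}/∂y is Hamiltonian,
i.e. φ = {g,−} for some g, then h is a constant. -/
theorem modular_hamiltonian_two_vars_implies_constant
    {k : Type*} [Field k] [CharZero k] (h g : MvPolynomial (Fin 2) k)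
    (br : MvPolynomial (Fin 2) k → MvPolynomial (Fin 2) k → MvPolynomial (Fin 2) k)
    (hbr : ∀ f f', br f f' =
      (pderiv 0 f * pderiv 1 f' - pderiv 1 f * pderiv 0 f') * h)
    (hham : ∀ f : MvPolynomial (Fin 2) k,
      pderiv 0 (br f (X 0)) + pderiv 1 (br f (X 1)) = br g f) :
    ∃ c : k, h = C c := by
  have e0 : pderiv (0:Fin 2) h = -(pderiv 0 g) * h := by
    have := hham (X 1)
    simp [hbr, pderiv_X_self, pderiv_X_of_ne (by decide : (0:Fin 2) ≠ 1),
      pderiv_X_of_ne (by decide : (1:Fin 2) ≠ 0), Derivation.map_neg] at this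
    linear_combination -this
  have e1 : pderiv (1:Fin 2) h = -(pderiv 1 g) * h := by
    have := hham (X 0)
    simp [hbr, pderiv_X_self, pderiv_X_of_ne (by decide : (0:Fin 2) ≠ 1),
      pderiv_X_of_ne (by decide : (1:Fin 2) ≠ 0), Derivation.map_neg] at this
    linear_combination this
  by_cases h0 : h = 0
  · exact ⟨0, by simp [h0]⟩
  have hsupp : h.support.Nonempty := by
    exact MvPolynomial.support_nonempty.mpr h0
  obtain ⟨α, hmem, hmax⟩ := h.support.exists_maximal hsupp
  have d0 : h ∣ pderiv (0:Fin 2) h := ⟨-(pderiv 0 g), by rw [e0, mul_comm]⟩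
  have d1 : h ∣ pderiv (1:Fin 2) h := ⟨-(pderiv 1 g), by rw [e1, mul_comm]⟩
  have hdvd : h ∣ (pderiv 0)^[α 0] ((pderiv 1)^[α 1] h) :=
    dvd_iter_pderiv 0 d0 _ (dvd_iter_pderiv 1 d1 _ dvd_rfl)
  obtain ⟨c', hc', heq⟩ := max_deriv_const h α hmem
    (fun b hb hlt => lt_irrefl α (lt_of_lt_of_le hlt (hmax hb hlt.le)))
  rw [heq] at hdvd
  have hu : IsUnit h :=
    isUnit_of_dvd_unit hdvd ((hc'.isUnit).map (C : k →+* MvPolynomial (Fin 2) k))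
  exact isUnit_eq_C hu
end

section
/- Let R = k[x_1,…,x_n] be a polynomial Poisson algebra (char k = 0). The modular derivation φ(f) = Σ_j ∂{f,x_j}/∂x_j is a Poisson derivation: it is a k-derivation of R and satisfies φ({f,g}) = {φ(f),g} + {f,φ(g)} for all f,g ∈ R. -/
open MvPolynomial

lemma pderiv_comm_aux {σ : Type*} {R : Type*} [CommSemiring R] (i j : σ)
    (p : MvPolynomial σ R) : pderiv i (pderiv j p) = pderiv j (pderiv i p) := by
  classical
  induction p using MvPolynomial.induction_on' with
  | monomial s a =>
    simp only [pderiv_monomial]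
    by_cases h : i = j
    · subst h; rfl
    · rw [Finsupp.tsub_apply, Finsupp.tsub_apply, Finsupp.single_apply, Finsupp.single_apply]
      simp only [h, Ne.symm h, if_false, Nat.sub_zero]
      rw [tsub_right_comm]
      ring_nf
  | add p q hp hq => simp [hp, hq]

/-- For a polynomial Poisson algebra R = k[x_1,…,x_n], the modular
derivation φ(f) = Σ_j ∂{f,x_j}/∂x_j is a Poisson derivation. -/
theorem modular_derivation_is_poisson_derivation
    {k : Type*} [Field k] [CharZero k] (n : ℕ)
    (br : MvPolynomial (Fin n) k →ₗ[k] MvPolynomial (Fin n) k →ₗ[k] MvPolynomial (Fin n) k)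
    (hskew : ∀ a b, br a b = - br b a)
    (hjac : ∀ a b c, br a (br b c) + br b (br c a) + br c (br a b) = 0)
    (hleib : ∀ a b c, br a (b * c) = br a b * c + b * br a c)
    (φ : MvPolynomial (Fin n) k → MvPolynomial (Fin n) k)
    (hφ : ∀ f, φ f = ∑ j : Fin n, pderiv j (br f (X j))) :
    (∀ f g, φ (f + g) = φ f + φ g) ∧
    (∀ (c : k) f, φ (c • f) = c • φ f) ∧
    (∀ f g, φ (f * g) = f * φ g + g * φ f) ∧
    (∀ f g, φ (br f g) = br (φ f) g + br f (φ g)) := by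
  have hbr1 : ∀ a, br a 1 = 0 := by
    intro a
    have h := hleib a 1 1
    simp only [mul_one, one_mul] at h
    linear_combination -h
  -- expansion of the bracket as a derivation in its second argument
  have hexp : ∀ a h : MvPolynomial (Fin n) k,
      br a h = ∑ j : Fin n, pderiv j h * br a (X j) := by
    intro a h
    induction h using MvPolynomial.induction_on with
    | C c =>
      have : (C c : MvPolynomial (Fin n) k) = c • 1 := by
        rw [MvPolynomial.smul_eq_C_mul, mul_one]
      rw [this, map_smul, hbr1]
      simp
    | add p q hp hq =>
      simp only [map_add, add_mul, Finset.sum_add_distrib, hp, hq]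
    | mul_X p i hp =>
      rw [hleib]
      have step : ∀ j : Fin n, pderiv j (p * X i) * br a (X j)
          = pderiv j p * br a (X j) * X i + p * (pderiv j (X i) * br a (X j)) := by
        intro j; rw [pderiv_mul]; ring
      rw [Finset.sum_congr rfl fun j _ => step j, Finset.sum_add_distrib,
        ← Finset.sum_mul, ← Finset.mul_sum, ← hp]
      congr 1
      congr 1
      rw [Finset.sum_eq_single i]
      · simp
      · intro j _ hj
        rw [pderiv_X_of_ne (Ne.symm hj), zero_mul]
      · simp
  refine ⟨?_, ?_, ?_, ?_⟩
  · intro f g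
    simp only [hφ, map_add, LinearMap.add_apply, Finset.sum_add_distrib]
  · intro c f
    simp only [hφ, map_smul, LinearMap.smul_apply, Finset.smul_sum]
    exact Finset.sum_congr rfl fun j _ => (pderiv j).map_smul c _
  · intro f g
    rw [hφ f, hφ g, hφ (f * g)]
    have key : ∀ j : Fin n, br (f * g) (X j) = br f (X j) * g + f * br g (X j) := by
      intro j
      rw [hskew (f * g) (X j), hleib, hskew (X j) f, hskew (X j) g]
      ring
    have step : ∀ j : Fin n, pderiv j (br (f * g) (X j))
        = (pderiv j (br f (X j)) * g + pderiv j (br g (X j)) * f)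
          + (br f (X j) * pderiv j g + br g (X j) * pderiv j f) := by
      intro j
      rw [key j, map_add, pderiv_mul, pderiv_mul]
      ring
    rw [Finset.sum_congr rfl fun j _ => step j]
    simp only [Finset.sum_add_distrib, ← Finset.sum_mul]
    have c1 : ∑ j : Fin n, br f (X j) * pderiv j g = br f g := by
      rw [hexp f g]; exact Finset.sum_congr rfl fun j _ => mul_comm _ _
    have c2 : ∑ j : Fin n, br g (X j) * pderiv j f = br g f := by
      rw [hexp g f]; exact Finset.sum_congr rfl fun j _ => mul_comm _ _
    rw [c1, c2, hskew g f]
    ring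
  · intro f g
    rw [hφ (br f g), hφ f, hφ g]
    have jkey : ∀ j : Fin n,
        br (br f g) (X j) = br f (br g (X j)) - br g (br f (X j)) := by
      intro j
      have h := hjac f g (X j)
      have h2 : br g (br (X j) f) = - br g (br f (X j)) := by
        rw [hskew (X j) f, map_neg]
      rw [hskew (br f g) (X j)]
      linear_combination -h + h2
    have cross : ∀ a b : MvPolynomial (Fin n) k,
        ∑ j : Fin n, (pderiv j (br a (br b (X j))) - br a (pderiv j (br b (X j))))
        = ∑ j : Fin n, ∑ i : Fin n,
            pderiv i (br b (X j)) * pderiv j (br a (X i)) := by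
      intro a b
      refine Finset.sum_congr rfl fun j _ => ?_
      rw [hexp a (br b (X j)), map_sum, hexp a (pderiv j (br b (X j))),
        ← Finset.sum_sub_distrib]
      refine Finset.sum_congr rfl fun i _ => ?_
      rw [pderiv_mul, pderiv_comm_aux j i]
      ring
    have symm : (∑ j : Fin n, ∑ i : Fin n,
          pderiv i (br g (X j)) * pderiv j (br f (X i)))
        = ∑ j : Fin n, ∑ i : Fin n,
            pderiv i (br f (X j)) * pderiv j (br g (X i)) := by
      rw [Finset.sum_comm]
      exact Finset.sum_congr rfl fun j _ => Finset.sum_congr rfl fun i _ => mul_comm _ _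
    have R1 : br (∑ j : Fin n, pderiv j (br f (X j))) g
        = - ∑ j : Fin n, br g (pderiv j (br f (X j))) := by
      rw [hskew, map_sum]
    have R2 : br f (∑ j : Fin n, pderiv j (br g (X j)))
        = ∑ j : Fin n, br f (pderiv j (br g (X j))) := map_sum _ _ _
    have L : ∀ j : Fin n, pderiv j (br (br f g) (X j))
        = pderiv j (br f (br g (X j))) - pderiv j (br g (br f (X j))) := by
      intro j; rw [jkey j, map_sub]
    rw [Finset.sum_congr rfl fun j _ => L j, R1, R2, Finset.sum_sub_distrib]
    have hc1 := cross f g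
    have hc2 := cross g f
    rw [Finset.sum_sub_distrib] at hc1 hc2
    linear_combination hc1 - hc2 + symm
end

section
/- Let R = k[x_1,…,x_n] (char k = 0) and f_3,…,f_n ∈ R. The Jacobian bracket {f,g} = J(f,g,f_3,…,f_n), where J denotes the Jacobian determinant det(∂f_i/∂x_j) of the n functions (f,g,f_3,…,f_n), defines a Poisson structure whose modular derivation φ(f) = Σ_j ∂{f,x_j}/∂x_j is identically zero; i.e. every Jacobian Poisson structure on a polynomial algebra is unimodular. -/
open MvPolynomial Finset


section AuxDet

variable {R A : Type*} [CommRing R] [CommRing A] [Algebra R A]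

theorem jps_deriv_prod {ι : Type*} [DecidableEq ι] (D : Derivation R A A) (s : Finset ι)
    (f : ι → A) :
    D (∏ i ∈ s, f i) = ∑ i ∈ s, D (f i) * ∏ j ∈ s.erase i, f j := by
  induction s using Finset.induction_on with
  | empty => simp
  | insert a s hx ih =>
    have h : ∀ i ∈ s, D (f i) * ∏ j ∈ (insert a s).erase i, f j
        = f a * (D (f i) * ∏ j ∈ s.erase i, f j) := by
      intro i hi
      rw [Finset.erase_insert_of_ne (by rintro rfl; exact hx hi),
        Finset.prod_insert (fun h => hx (Finset.mem_of_mem_erase h))]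
      ring
    rw [Finset.prod_insert hx, D.leibniz, Finset.sum_insert hx, Finset.erase_insert hx,
      smul_eq_mul, smul_eq_mul, ih, Finset.mul_sum, Finset.sum_congr rfl h]
    ring

theorem jps_deriv_det {ι : Type*} [Fintype ι] [DecidableEq ι] (D : Derivation R A A)
    (M : Matrix ι ι A) :
    D M.det = ∑ i, (M.updateRow i fun l => D (M i l)).det := by
  rw [Matrix.det_apply', map_sum]
  have h1 : ∀ σ : Equiv.Perm ι, D (((Equiv.Perm.sign σ : ℤ) : A) * ∏ l, M (σ l) l)
      = ∑ i, ((Equiv.Perm.sign σ : ℤ) : A) *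
        (D (M i (σ.symm i)) * ∏ l ∈ Finset.univ.erase (σ.symm i), M (σ l) l) := by
    intro σ
    rw [D.leibniz, D.map_intCast, smul_zero, add_zero, smul_eq_mul,
      jps_deriv_prod D Finset.univ (fun l => M (σ l) l), Finset.mul_sum]
    refine (Fintype.sum_equiv σ.symm _ _ ?_).symm
    intro i
    simp
  rw [Finset.sum_congr rfl (fun σ _ => h1 σ), Finset.sum_comm]
  apply Finset.sum_congr rfl
  intro i _
  rw [Matrix.det_apply']
  apply Finset.sum_congr rfl
  intro σ _
  rw [← Finset.mul_prod_erase Finset.univ _ (Finset.mem_univ (σ.symm i))]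
  have e1 : M.updateRow i (fun l => D (M i l)) (σ (σ.symm i)) (σ.symm i)
      = D (M i (σ.symm i)) := by
    rw [Equiv.apply_symm_apply, Matrix.updateRow_self]
  have e2 : ∀ l ∈ Finset.univ.erase (σ.symm i),
      M.updateRow i (fun l' => D (M i l')) (σ l) l = M (σ l) l := by
    intro l hl
    rw [Matrix.updateRow_apply, if_neg]
    intro h
    exact (Finset.ne_of_mem_erase hl) (by rw [← h, Equiv.symm_apply_apply])
  rw [e1, Finset.prod_congr rfl e2]

theorem jps_det_updateRow_expand {ι : Type*} [Fintype ι] [DecidableEq ι]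
    (M : Matrix ι ι A) (i : ι) (v : ι → A) :
    (M.updateRow i v).det = ∑ l, v l * (M.updateRow i (Pi.single l 1)).det := by
  have key : ∀ s : Finset ι, (M.updateRow i (fun l => if l ∈ s then v l else 0)).det
      = ∑ l ∈ s, v l * (M.updateRow i (Pi.single l 1)).det := by
    intro s
    induction s using Finset.induction_on with
    | empty =>
      rw [Finset.sum_empty]
      exact Matrix.det_eq_zero_of_row_eq_zero i (fun j => by simp)
    | insert a s hx ih =>
      have hrow : (fun l => if l ∈ insert a s then v l else 0)
          = (v a • (Pi.single a 1 : ι → A)) + fun l => if l ∈ s then v l else 0 := by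
        funext l
        by_cases hl : l = a
        · subst hl
          simp [hx]
        · simp [hl, Finset.mem_insert, Pi.single_apply]
      rw [hrow, Matrix.det_updateRow_add, Matrix.det_updateRow_smul, ih,
        Finset.sum_insert hx]
  have : v = fun l => if l ∈ Finset.univ then v l else 0 := by
    funext l; simp
  conv_lhs => rw [this]
  rw [key Finset.univ]

theorem jps_det_updateRow_lin {ι : Type*} [Fintype ι] [DecidableEq ι]
    (M : Matrix ι ι A) (i : ι) (c : ι → A) (vv : ι → ι → A) :
    (M.updateRow i (fun l => ∑ j, c j * vv j l)).det
      = ∑ j, c j * (M.updateRow i (vv j)).det := by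
  rw [jps_det_updateRow_expand]
  have h : ∀ j (_ : j ∈ Finset.univ), c j * (M.updateRow i (vv j)).det
      = ∑ l, c j * (vv j l * (M.updateRow i (Pi.single l 1)).det) := by
    intro j _
    rw [jps_det_updateRow_expand, Finset.mul_sum]
  rw [Finset.sum_congr rfl h, Finset.sum_comm]
  apply Finset.sum_congr rfl
  intro l _
  rw [Finset.sum_mul]
  apply Finset.sum_congr rfl
  intro j _
  ring

end AuxDet

section Poly

variable {k : Type*} [Field k] {n : ℕ}

theorem jps_pderiv_comm (i j : Fin n) (f : MvPolynomial (Fin n) k) :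
    pderiv i (pderiv j f) = pderiv j (pderiv i f) := by
  induction f using MvPolynomial.induction_on with
  | C a => simp
  | add p q hp hq => simp [hp, hq]
  | mul_X p s hp =>
    by_cases his : i = s
    · subst his
      by_cases hjs : j = i
      · subst hjs; rfl
      · simp only [pderiv_mul, pderiv_X_of_ne (show i ≠ j from fun h => hjs h.symm),
          pderiv_X_self, hp, map_add, mul_zero, add_zero, mul_one]
    · by_cases hjs : j = s
      · subst hjs
        simp only [pderiv_mul, pderiv_X_of_ne (show j ≠ i from fun h => his h.symm),
          pderiv_X_self, hp, map_add, mul_zero, add_zero, mul_one]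
      · simp [pderiv_mul, pderiv_X_of_ne (show s ≠ i from fun h => his h.symm),
          pderiv_X_of_ne (show s ≠ j from fun h => hjs h.symm), hp]

/-- The Jacobian matrix of a family of polynomials. -/
noncomputable def JMat (u : Fin n → MvPolynomial (Fin n) k) :
    Matrix (Fin n) (Fin n) (MvPolynomial (Fin n) k) :=
  Matrix.of fun i j => pderiv j (u i)

theorem jps_divergence_zero [CharZero k] (u : Fin n → MvPolynomial (Fin n) k) (i₁ : Fin n) :
    ∑ j, pderiv j (JMat (Function.update u i₁ (X j))).det = 0 := by
  classical
  have hrow : ∀ j : Fin n, JMat (Function.update u i₁ (X j))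
      = (JMat u).updateRow i₁ (Pi.single j 1) := by
    intro j
    refine Matrix.ext fun a b => ?_
    by_cases ha : a = i₁
    · subst ha
      simp only [JMat, Matrix.of_apply, Function.update_self, Matrix.updateRow_self]
      rw [pderiv_X]
      simp [Pi.single_apply, eq_comm]
    · simp [JMat, Matrix.updateRow_ne ha, Function.update_of_ne ha]
  have hder : ∀ j : Fin n, pderiv j (JMat (Function.update u i₁ (X j))).det
      = ∑ i, (((JMat u).updateRow i₁ (Pi.single j 1)).updateRow i
          (fun l => pderiv j (((JMat u).updateRow i₁ (Pi.single j 1)) i l))).det := by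
    intro j
    rw [hrow j, jps_deriv_det (pderiv j)]
  rw [Finset.sum_congr rfl (fun j _ => hder j), Finset.sum_comm]
  apply Finset.sum_eq_zero
  intro i _
  by_cases hi : i = i₁
  · subst hi
    apply Finset.sum_eq_zero
    intro j _
    apply Matrix.det_eq_zero_of_row_eq_zero i
    intro l
    rw [Matrix.updateRow_self, Matrix.updateRow_self]
    rcases eq_or_ne l j with h | h
    · subst h; simp [Pi.single_apply]
    · simp [Pi.single_apply, (Ne.symm h)]
  · -- i ≠ i₁
    have hterm : ∀ j : Fin n,
        (((JMat u).updateRow i₁ (Pi.single j 1)).updateRow i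
          (fun l => pderiv j (((JMat u).updateRow i₁ (Pi.single j 1)) i l))).det
        = ∑ l, pderiv j (pderiv l (u i)) *
            (((JMat u).updateRow i₁ (Pi.single j 1)).updateRow i (Pi.single l 1)).det := by
      intro j
      have : (fun l => pderiv j (((JMat u).updateRow i₁ (Pi.single j 1)) i l))
          = fun l => pderiv j (pderiv l (u i)) := by
        funext l
        rw [Matrix.updateRow_ne hi]
        rfl
      rw [this, jps_det_updateRow_expand]
    rw [Finset.sum_congr rfl (fun j _ => hterm j)]
    set c : Fin n → Fin n → MvPolynomial (Fin n) k :=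
      fun j l => pderiv j (pderiv l (u i)) with hc
    set d : Fin n → Fin n → MvPolynomial (Fin n) k :=
      fun j l => (((JMat u).updateRow i₁ (Pi.single j 1)).updateRow i (Pi.single l 1)).det
        with hd
    have hcsymm : ∀ j l, c j l = c l j := by
      intro j l; exact jps_pderiv_comm j l (u i)
    have hdanti : ∀ j l, d l j = - d j l := by
      intro j l
      have hmat : ((JMat u).updateRow i₁ (Pi.single l 1)).updateRow i (Pi.single j 1)
          = (((JMat u).updateRow i₁ (Pi.single j 1)).updateRow i (Pi.single l 1)).submatrix
            (Equiv.swap i₁ i) id := by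
        refine Matrix.ext fun a b => ?_
        simp only [Matrix.submatrix_apply, id_eq]
        by_cases ha1 : a = i₁
        · have hswap : Equiv.swap i₁ i a = i := by rw [ha1, Equiv.swap_apply_left]
          have hane : a ≠ i := by rw [ha1]; exact fun h => hi h.symm
          rw [hswap, Matrix.updateRow_self, Matrix.updateRow_ne hane, ha1,
            Matrix.updateRow_self]
        · by_cases ha2 : a = i
          · rw [ha2, Equiv.swap_apply_right, Matrix.updateRow_self,
              Matrix.updateRow_ne (show i₁ ≠ i from fun h => hi h.symm),
              Matrix.updateRow_self]
          · rw [Equiv.swap_apply_of_ne_of_ne ha1 ha2, Matrix.updateRow_ne ha2,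
              Matrix.updateRow_ne ha1, Matrix.updateRow_ne ha2, Matrix.updateRow_ne ha1]
      rw [hd]
      simp only
      rw [hmat, Matrix.det_permute, Equiv.Perm.sign_swap (fun h => hi h.symm)]
      simp
    have hS : (∑ j, ∑ l, c j l * d j l) = - ∑ j, ∑ l, c j l * d j l := by
      conv_lhs => rw [Finset.sum_comm]
      rw [← Finset.sum_neg_distrib]
      apply Finset.sum_congr rfl
      intro j _
      rw [← Finset.sum_neg_distrib]
      apply Finset.sum_congr rfl
      intro l _
      rw [← hcsymm, hdanti]
      ring
    have h2 : (∑ j, ∑ l, c j l * d j l) + (∑ j, ∑ l, c j l * d j l) = 0 := by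
      nth_rewrite 2 [hS]
      ring
    exact add_self_eq_zero.mp h2

theorem jps_chain [CharZero k] (u w : Fin n → MvPolynomial (Fin n) k) :
    ∑ i, ((JMat u).updateRow i
        (fun l => pderiv l (∑ j, w j * pderiv j (u i)))).det
      = (∑ j, w j * pderiv j (JMat u).det) + (JMat u).det * ∑ j, pderiv j (w j) := by
  classical
  have hrow : ∀ i : Fin n, (fun l => pderiv l (∑ j, w j * pderiv j (u i)))
      = (fun l => ∑ j, pderiv j (u i) * pderiv l (w j))
        + (fun l => ∑ j, w j * pderiv l (pderiv j (u i))) := by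
    intro i
    funext l
    simp only [map_sum, pderiv_mul, Pi.add_apply]
    rw [← Finset.sum_add_distrib]
    apply Finset.sum_congr rfl
    intro j _
    ring
  have hterm : ∀ i : Fin n, ((JMat u).updateRow i
        (fun l => pderiv l (∑ j, w j * pderiv j (u i)))).det
      = (∑ j, pderiv j (u i) * ((JMat u).updateRow i (fun l => pderiv l (w j))).det)
        + (∑ j, w j * ((JMat u).updateRow i (fun l => pderiv l (pderiv j (u i)))).det) := by
    intro i
    rw [hrow i, Matrix.det_updateRow_add,
      jps_det_updateRow_lin (JMat u) i (fun j => pderiv j (u i))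
        (fun j l => pderiv l (w j)),
      jps_det_updateRow_lin (JMat u) i w (fun j l => pderiv l (pderiv j (u i)))]
  rw [Finset.sum_congr rfl (fun i _ => hterm i), Finset.sum_add_distrib]
  conv_rhs => rw [add_comm]
  congr 1
  · -- trace part
    have hexp : ∀ i j : Fin n, ((JMat u).updateRow i (fun l => pderiv l (w j))).det
        = ∑ l, pderiv l (w j) * (JMat u).adjugate l i := by
      intro i j
      rw [jps_det_updateRow_expand]
      apply Finset.sum_congr rfl
      intro l _
      rw [Matrix.adjugate_apply]
    calc ∑ i, ∑ j, pderiv j (u i) * ((JMat u).updateRow i (fun l => pderiv l (w j))).det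
        = ∑ j, ∑ l, pderiv l (w j) * ((JMat u).adjugate * (JMat u)) l j := by
          rw [Finset.sum_comm]
          apply Finset.sum_congr rfl
          intro j _
          have : ∀ i (_ : i ∈ Finset.univ),
              pderiv j (u i) * ((JMat u).updateRow i (fun l => pderiv l (w j))).det
              = ∑ l, pderiv l (w j) * ((JMat u).adjugate l i * pderiv j (u i)) := by
            intro i _
            rw [hexp i j, Finset.mul_sum]
            apply Finset.sum_congr rfl
            intro l _
            ring
          rw [Finset.sum_congr rfl this, Finset.sum_comm]
          apply Finset.sum_congr rfl
          intro l _
          rw [Matrix.mul_apply, Finset.mul_sum]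
          rfl
      _ = (JMat u).det * ∑ j, pderiv j (w j) := by
          rw [Matrix.adjugate_mul, Finset.mul_sum]
          apply Finset.sum_congr rfl
          intro j _
          rw [Finset.sum_eq_single j]
          · rw [Matrix.smul_apply, Matrix.one_apply_eq, smul_eq_mul, mul_one, mul_comm]
          · intro l _ hlj
            simp [Matrix.one_apply, hlj]
          · intro h
            exact absurd (Finset.mem_univ j) h
  · -- Lie derivative part
    rw [Finset.sum_comm]
    apply Finset.sum_congr rfl
    intro j _
    rw [jps_deriv_det (pderiv j) (JMat u), Finset.mul_sum]
    apply Finset.sum_congr rfl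
    intro i _
    rw [show (fun l => pderiv l (pderiv j (u i)))
        = (fun l => pderiv j ((JMat u) i l)) from
      funext fun l => jps_pderiv_comm l j (u i)]

end Poly
section Main

variable {k : Type*} [Field k] {n : ℕ}

/-- The rows of the Jacobian bracket matrix. -/
noncomputable def jpsRows (hs : Fin n → MvPolynomial (Fin n) k)
    (f g : MvPolynomial (Fin n) k) : Fin n → MvPolynomial (Fin n) k :=
  fun i => if (i : ℕ) = 0 then f else if (i : ℕ) = 1 then g else hs i

theorem jps_main [CharZero k] (hn : 2 ≤ n) (hs : Fin n → MvPolynomial (Fin n) k) :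
    (∀ f g e : MvPolynomial (Fin n) k,
      (JMat (jpsRows hs f (JMat (jpsRows hs g e)).det)).det
        + (JMat (jpsRows hs g (JMat (jpsRows hs e f)).det)).det
        + (JMat (jpsRows hs e (JMat (jpsRows hs f g)).det)).det = 0) ∧
    (∀ f : MvPolynomial (Fin n) k,
      ∑ j, pderiv j (JMat (jpsRows hs f (X j))).det = 0) := by
  classical
  haveI : NeZero n := ⟨by omega⟩
  have h0 : ((0 : Fin n) : ℕ) = 0 := Fin.val_zero n
  have h1 : ((1 : Fin n) : ℕ) = 1 := by
    rw [Fin.val_one']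
    exact Nat.mod_eq_of_lt (by omega)
  have h01 : (0 : Fin n) ≠ 1 := by
    intro h
    have := congrArg Fin.val h
    rw [h0, h1] at this
    exact absurd this (by omega)
  have hr0 : ∀ f g, jpsRows hs f g 0 = f := by
    intro f g
    simp only [jpsRows]
    rw [h0]
    norm_num
  have hr1 : ∀ f g, jpsRows hs f g 1 = g := by
    intro f g
    simp only [jpsRows]
    rw [h1]
    norm_num
  have hvne0 : ∀ i : Fin n, i ≠ 0 → (i : ℕ) ≠ 0 := by
    intro i hi h; exact hi (Fin.ext (by rw [h, h0]))
  have hvne1 : ∀ i : Fin n, i ≠ 1 → (i : ℕ) ≠ 1 := by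
    intro i hi h; exact hi (Fin.ext (by rw [h, h1]))
  have hrg : ∀ (f g g' : MvPolynomial (Fin n) k) (i : Fin n), i ≠ 1 →
      jpsRows hs f g i = jpsRows hs f g' i := by
    intro f g g' i hi
    have hv := hvne1 i hi
    by_cases hz : (i : ℕ) = 0 <;> simp [jpsRows, hz, hv]
  have hrf : ∀ (f f' g : MvPolynomial (Fin n) k) (i : Fin n), i ≠ 0 →
      jpsRows hs f g i = jpsRows hs f' g i := by
    intro f f' g i hi
    have hv := hvne0 i hi
    simp [jpsRows, hv]
  have hri : ∀ (f g : MvPolynomial (Fin n) k) (i : Fin n), (i : ℕ) ≠ 0 → (i : ℕ) ≠ 1 →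
      jpsRows hs f g i = hs i := by
    intro f g i hv0 hv1
    simp [jpsRows, hv0, hv1]
  -- expansion of the bracket along the second row
  have hL1 : ∀ f g : MvPolynomial (Fin n) k, (JMat (jpsRows hs f g)).det
      = ∑ j, pderiv j g * (JMat (jpsRows hs f (X j))).det := by
    intro f g
    have hmat : ∀ j : Fin n, JMat (jpsRows hs f (X j))
        = (JMat (jpsRows hs f g)).updateRow 1 (Pi.single j 1) := by
      intro j
      refine Matrix.ext fun a b => ?_
      by_cases ha : a = 1
      · rw [ha, Matrix.updateRow_self]
        show pderiv b (jpsRows hs f (X j) 1) = _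
        rw [hr1, pderiv_X]
        simp [Pi.single_apply, eq_comm]
      · rw [Matrix.updateRow_ne ha]
        show pderiv b (jpsRows hs f (X j) a) = pderiv b (jpsRows hs f g a)
        rw [hrg f (X j) g a ha]
    conv_lhs => rw [← Matrix.updateRow_eq_self (JMat (jpsRows hs f g)) 1]
    rw [jps_det_updateRow_expand]
    apply Finset.sum_congr rfl
    intro j _
    rw [hmat j]
    congr 1
    show pderiv j (jpsRows hs f g 1) = pderiv j g
    rw [hr1]
  -- antisymmetry
  have hanti : ∀ f g : MvPolynomial (Fin n) k,
      (JMat (jpsRows hs g f)).det = - (JMat (jpsRows hs f g)).det := by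
    intro f g
    have hmat : JMat (jpsRows hs g f)
        = (JMat (jpsRows hs f g)).submatrix (Equiv.swap 0 1) id := by
      refine Matrix.ext fun a b => ?_
      simp only [Matrix.submatrix_apply, id_eq]
      show pderiv b (jpsRows hs g f a) = pderiv b (jpsRows hs f g (Equiv.swap 0 1 a))
      congr 1
      by_cases ha0 : a = 0
      · rw [ha0, Equiv.swap_apply_left, hr0, hr1]
      · by_cases ha1 : a = 1
        · rw [ha1, Equiv.swap_apply_right, hr1, hr0]
        · rw [Equiv.swap_apply_of_ne_of_ne ha0 ha1,
            hri g f a (hvne0 a ha0) (hvne1 a ha1), hri f g a (hvne0 a ha0) (hvne1 a ha1)]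
    rw [hmat, Matrix.det_permute, Equiv.Perm.sign_swap h01]
    simp
  -- bracket with a fixed polynomial of the family vanishes
  have hzero : ∀ (f : MvPolynomial (Fin n) k) (i : Fin n), (i : ℕ) ≠ 0 → (i : ℕ) ≠ 1 →
      (JMat (jpsRows hs f (hs i))).det = 0 := by
    intro f i hv0 hv1
    have hne : (1 : Fin n) ≠ i := fun h => hv1 (by rw [← h, h1])
    apply Matrix.det_zero_of_row_eq hne
    funext b
    show pderiv b (jpsRows hs f (hs i) 1) = pderiv b (jpsRows hs f (hs i) i)
    rw [hr1, hri f (hs i) i hv0 hv1]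
  -- unimodularity
  have huni : ∀ f : MvPolynomial (Fin n) k,
      ∑ j, pderiv j (JMat (jpsRows hs f (X j))).det = 0 := by
    intro f
    have hupd : ∀ j : Fin n, jpsRows hs f (X j)
        = Function.update (jpsRows hs f 0) 1 (X j) := by
      intro j
      funext i
      by_cases hi : i = 1
      · rw [hi, Function.update_self, hr1]
      · rw [Function.update_of_ne hi, hrg f (X j) 0 i hi]
    have hsum : ∀ j ∈ Finset.univ, pderiv j (JMat (jpsRows hs f (X j))).det
        = pderiv j (JMat (Function.update (jpsRows hs f 0) 1 (X j))).det :=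
      fun j _ => by rw [hupd j]
    rw [Finset.sum_congr rfl hsum]
    exact jps_divergence_zero (jpsRows hs f 0) 1
  -- linearity in the second argument w.r.t. negation
  have hneg : ∀ a x : MvPolynomial (Fin n) k,
      (JMat (jpsRows hs a (-x))).det = - (JMat (jpsRows hs a x)).det := by
    intro a x
    rw [hL1 a (-x), hL1 a x, ← Finset.sum_neg_distrib]
    apply Finset.sum_congr rfl
    intro j _
    rw [map_neg, neg_mul]
  -- the core identity
  have hcore : ∀ f g e : MvPolynomial (Fin n) k,
      (JMat (jpsRows hs (JMat (jpsRows hs f g)).det e)).det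
        + (JMat (jpsRows hs g (JMat (jpsRows hs f e)).det)).det
      = (JMat (jpsRows hs f (JMat (jpsRows hs g e)).det)).det := by
    intro f g e
    have hchain := jps_chain (jpsRows hs g e) (fun j => (JMat (jpsRows hs f (X j))).det)
    have hinner : ∀ h : MvPolynomial (Fin n) k,
        (∑ j, (JMat (jpsRows hs f (X j))).det * pderiv j h)
          = (JMat (jpsRows hs f h)).det := by
      intro h
      rw [hL1 f h]
      apply Finset.sum_congr rfl
      intro j _
      ring
    rw [hinner ((JMat (jpsRows hs g e)).det), huni f, mul_zero, add_zero] at hchain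
    -- now compute the left side of the chain identity
    have hFs : ∀ i ∈ Finset.univ, ((JMat (jpsRows hs g e)).updateRow i
        (fun l => pderiv l (∑ j, (JMat (jpsRows hs f (X j))).det
          * pderiv j (jpsRows hs g e i)))).det
        = (if i = 0 then (JMat (jpsRows hs (JMat (jpsRows hs f g)).det e)).det else
            if i = 1 then (JMat (jpsRows hs g (JMat (jpsRows hs f e)).det)).det else 0) := by
      intro i _
      by_cases hi0 : i = 0
      · rw [if_pos hi0, hi0]
        have hrow : (fun l => pderiv l (∑ j, (JMat (jpsRows hs f (X j))).det
            * pderiv j (jpsRows hs g e (0 : Fin n))))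
            = fun l => pderiv l ((JMat (jpsRows hs f g)).det) := by
          funext l
          rw [hr0, hinner g]
        rw [hrow]
        congr 1
        refine Matrix.ext fun a b => ?_
        by_cases ha : a = 0
        · rw [ha, Matrix.updateRow_self]
          show _ = pderiv b (jpsRows hs (JMat (jpsRows hs f g)).det e 0)
          rw [hr0]
        · rw [Matrix.updateRow_ne ha]
          show pderiv b (jpsRows hs g e a)
            = pderiv b (jpsRows hs (JMat (jpsRows hs f g)).det e a)
          rw [hrf g (JMat (jpsRows hs f g)).det e a ha]
      · rw [if_neg hi0]
        by_cases hi1 : i = 1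
        · rw [if_pos hi1, hi1]
          have hrow : (fun l => pderiv l (∑ j, (JMat (jpsRows hs f (X j))).det
              * pderiv j (jpsRows hs g e (1 : Fin n))))
              = fun l => pderiv l ((JMat (jpsRows hs f e)).det) := by
            funext l
            rw [hr1, hinner e]
          rw [hrow]
          congr 1
          refine Matrix.ext fun a b => ?_
          by_cases ha : a = 1
          · rw [ha, Matrix.updateRow_self]
            show _ = pderiv b (jpsRows hs g (JMat (jpsRows hs f e)).det 1)
            rw [hr1]
          · rw [Matrix.updateRow_ne ha]
            show pderiv b (jpsRows hs g e a)
              = pderiv b (jpsRows hs g (JMat (jpsRows hs f e)).det a)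
            rw [hrg g e (JMat (jpsRows hs f e)).det a ha]
        · rw [if_neg hi1]
          have hrow : (fun l => pderiv l (∑ j, (JMat (jpsRows hs f (X j))).det
              * pderiv j (jpsRows hs g e i)))
              = fun l => (0 : MvPolynomial (Fin n) k) := by
            funext l
            rw [hinner (jpsRows hs g e i), hri g e i (hvne0 i hi0) (hvne1 i hi1),
              hzero f i (hvne0 i hi0) (hvne1 i hi1), map_zero]
          rw [hrow]
          apply Matrix.det_eq_zero_of_row_eq_zero i
          intro l
          rw [Matrix.updateRow_self]
    rw [Finset.sum_congr rfl hFs] at hchain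
    have hsplit : ∀ i : Fin n,
        (if i = 0 then (JMat (jpsRows hs (JMat (jpsRows hs f g)).det e)).det else
          if i = 1 then (JMat (jpsRows hs g (JMat (jpsRows hs f e)).det)).det else 0)
        = (if i = 0 then (JMat (jpsRows hs (JMat (jpsRows hs f g)).det e)).det else 0)
          + (if i = 1 then (JMat (jpsRows hs g (JMat (jpsRows hs f e)).det)).det else 0) := by
      intro i
      by_cases hi0 : i = 0
      · rw [if_pos hi0, if_pos hi0, if_neg (by rw [hi0]; exact h01), add_zero]
      · rw [if_neg hi0, if_neg hi0, zero_add]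
    rw [Finset.sum_congr rfl (fun i _ => hsplit i), Finset.sum_add_distrib,
      Finset.sum_ite_eq' Finset.univ (0 : Fin n)
        (fun _ => (JMat (jpsRows hs (JMat (jpsRows hs f g)).det e)).det),
      Finset.sum_ite_eq' Finset.univ (1 : Fin n)
        (fun _ => (JMat (jpsRows hs g (JMat (jpsRows hs f e)).det)).det),
      if_pos (Finset.mem_univ _), if_pos (Finset.mem_univ _)] at hchain
    exact hchain
  refine ⟨?_, huni⟩
  intro f g e
  rw [hanti f e, hneg g ((JMat (jpsRows hs f e)).det),
    hanti (JMat (jpsRows hs f g)).det e, ← hcore f g e]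
  ring

end Main


open MvPolynomial

/-- The Jacobian bracket {f,g} = J(f,g,f_3,…,f_n): determinant of the Jacobian
matrix whose rows are the gradients of f, g, f_3, …, f_n (the latter given by
`hs i` for indices i ≥ 2). -/
noncomputable def jacobianBracket {k : Type*} [Field k] (n : ℕ)
    (hs : Fin n → MvPolynomial (Fin n) k)
    (f g : MvPolynomial (Fin n) k) : MvPolynomial (Fin n) k :=
  Matrix.det (Matrix.of fun i j : Fin n =>
    if (i : ℕ) = 0 then pderiv j f
    else if (i : ℕ) = 1 then pderiv j g
    else pderiv j (hs i))

/-- the Jacobian bracket on k[x_1,…,x_n] is a Poisson structure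
(Jacobi identity holds) and it is unimodular: its modular derivation
φ(f) = Σ_j ∂{f,x_j}/∂x_j vanishes identically. -/
theorem jacobian_poisson_structure_is_unimodular
    {k : Type*} [Field k] [CharZero k] (n : ℕ) (hn : 2 ≤ n)
    (hs : Fin n → MvPolynomial (Fin n) k)
    (br : MvPolynomial (Fin n) k → MvPolynomial (Fin n) k → MvPolynomial (Fin n) k)
    (hbr : ∀ f g, br f g = jacobianBracket n hs f g) :
    (∀ f g e, br f (br g e) + br g (br e f) + br e (br f g) = 0) ∧
    (∀ f, ∑ j : Fin n, pderiv j (br f (X j)) = 0) := by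
  have hB : ∀ f g, br f g = (JMat (jpsRows hs f g)).det := by
    intro f g
    rw [hbr]
    apply congrArg Matrix.det
    refine Matrix.ext fun i j => ?_
    show (if (i : ℕ) = 0 then pderiv j f else if (i : ℕ) = 1 then pderiv j g
      else pderiv j (hs i)) = pderiv j (jpsRows hs f g i)
    simp only [jpsRows, apply_ite (⇑(pderiv j))]
  obtain ⟨hjac, huni⟩ := jps_main hn hs
  constructor
  · intro f g e
    simp only [hB]
    exact hjac f g e
  · intro f
    have hsum : ∀ j ∈ Finset.univ, pderiv j (br f (X j))
        = pderiv j (JMat (jpsRows hs f (X j))).det := fun j _ => by rw [hB]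
    rw [Finset.sum_congr rfl hsum]
    exact huni f
end

section
/- Let R = k[x,y,z] with the Poisson structure {x,y}=0, {y,z}=y, {z,x}=−1 (char k = 0). If f ∈ k[x,y] (i.e. ∂f/∂z = 0) satisfies ∂f/∂x + y·∂f/∂y + f = 0, then f = 0. Consequently the third Poisson homology PH_3(R,R), which equals the kernel of the boundary map ∂ : Ω^3(R) → Ω^2(R) and is isomorphic to {f ∈ R : ∂f/∂z = 0 and ∂f/∂x + y ∂f/∂y + f = 0}, is zero. -/
open MvPolynomial

lemma coeff_pderiv_aux {σ R : Type*} [CommSemiring R] [DecidableEq σ] (i : σ)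
    (f : MvPolynomial σ R) (m : σ →₀ ℕ) :
    coeff m (pderiv i f) = (m i + 1) * coeff (m + Finsupp.single i 1) f := by
  induction f using MvPolynomial.induction_on' with
  | monomial s a =>
    rw [pderiv_monomial, coeff_monomial, coeff_monomial]
    by_cases h : s = m + Finsupp.single i 1
    · subst h
      have h1 : (m + Finsupp.single i 1) - Finsupp.single i 1 = m := add_tsub_cancel_right _ _
      simp [h1, Finsupp.add_apply, Finsupp.single_apply, mul_comm]
    · rw [if_neg h]
      by_cases h2 : s - Finsupp.single i 1 = m
      · by_cases h3 : s i = 0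
        · simp [h3]
        · exfalso
          apply h
          have hle : Finsupp.single i 1 ≤ s := by
            rw [Finsupp.single_le_iff]
            omega
          rw [← h2, tsub_add_cancel_of_le hle]
      · simp [h2]
  | add p q hp hq =>
    simp [map_add, coeff_add, hp, hq, mul_add]

/-- On R = k[x,y,z], if ∂f/∂z = 0 and ∂f/∂x + y·∂f/∂y + f = 0
then f = 0; consequently PH_3(R,R) ≅ {f : ∂f/∂z = 0, ∂f/∂x + y ∂f/∂y + f = 0}
is zero for the Poisson structure {x,y}=0, {y,z}=y, {z,x}=−1. -/
theorem third_poisson_homology_vanishes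
    {k : Type*} [Field k] [CharZero k] :
    (∀ f : MvPolynomial (Fin 3) k, pderiv 2 f = 0 →
        pderiv 0 f + X 1 * pderiv 1 f + f = 0 → f = 0) ∧
    {f : MvPolynomial (Fin 3) k |
        pderiv 2 f = 0 ∧ pderiv 0 f + X 1 * pderiv 1 f + f = 0} = {0} := by
  have main : ∀ f : MvPolynomial (Fin 3) k, pderiv 2 f = 0 →
      pderiv 0 f + X 1 * pderiv 1 f + f = 0 → f = 0 := by
    intro f _ heq
    -- key coefficient relation
    have key : ∀ m : Fin 3 →₀ ℕ,
        ((m 0 : k) + 1) * coeff (m + Finsupp.single 0 1) f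
          + ((m 1 : k) + 1) * coeff m f = 0 := by
      intro m
      have h0 := congrArg (coeff m) heq
      rw [coeff_add, coeff_add, coeff_zero, coeff_pderiv_aux, coeff_X_mul'] at h0
      by_cases hm : (1 : Fin 3) ∈ m.support
      · rw [if_pos hm, coeff_pderiv_aux] at h0
        have h1 : m - Finsupp.single 1 1 + Finsupp.single 1 1 = m := by
          apply tsub_add_cancel_of_le
          rw [Finsupp.single_le_iff]
          have := Finsupp.mem_support_iff.mp hm
          omega
        rw [h1] at h0
        have h2 : ((m - Finsupp.single 1 1 : Fin 3 →₀ ℕ)) 1 = m 1 - 1 := by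
          rw [Finsupp.tsub_apply, Finsupp.single_apply]; simp
        have h3 : m 1 ≥ 1 := by
          have := Finsupp.mem_support_iff.mp hm; omega
        rw [h2] at h0
        have h4 : ((m 1 - 1 : ℕ) : k) + 1 = (m 1 : k) := by
          have : ((m 1 - 1 : ℕ) : k) = (m 1 : k) - 1 := by
            push_cast [Nat.cast_sub h3]; ring
          rw [this]; ring
        rw [h4] at h0
        linear_combination h0
      · rw [if_neg hm] at h0
        have h5 : m 1 = 0 := by
          by_contra h
          exact hm (Finsupp.mem_support_iff.mpr (by omega))
        rw [h5]
        push_cast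
        linear_combination h0
    -- downward induction on first exponent
    have aux : ∀ n : ℕ, ∀ m : Fin 3 →₀ ℕ, f.totalDegree + 1 ≤ m 0 + n →
        coeff m f = 0 := by
      intro n
      induction n with
      | zero =>
        intro m hm
        apply coeff_eq_zero_of_totalDegree_lt
        have hle : m 0 ≤ m.sum fun _ e => e := by
          by_cases h : (0 : Fin 3) ∈ m.support
          · exact Finset.single_le_sum (fun i _ => Nat.zero_le _) h
          · simp [Finsupp.notMem_support_iff.mp h]
        exact lt_of_lt_of_le (by omega) hle
      | succ n ih =>
        intro m hm
        have h1 : coeff (m + Finsupp.single 0 1) f = 0 := by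
          apply ih
          simp [Finsupp.add_apply]
          omega
        have h2 := key m
        rw [h1, mul_zero, zero_add] at h2
        have h3 : ((m 1 : k) + 1) ≠ 0 := by
          have : ((m 1 + 1 : ℕ) : k) ≠ 0 := Nat.cast_ne_zero.mpr (by omega)
          push_cast at this
          exact this
        exact (mul_eq_zero.mp h2).resolve_left h3
    ext m
    rw [coeff_zero]
    exact aux (f.totalDegree + 1) m (by omega)
  refine ⟨main, ?_⟩
  ext f
  simp only [Set.mem_setOf_eq, Set.mem_singleton_iff]
  constructor
  · rintro ⟨h1, h2⟩; exact main f h1 h2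
  · rintro rfl; simp
end

section
/- Let R = k[x,y,z] (char k = 0). The set {g ∈ R : ∂g/∂z = 0 and ∂g/∂x + y·∂g/∂y = 0} equals the set of constants k·1. (This computes PH_3(R, R_t) ≅ k for the Poisson structure {x,y}=0, {y,z}=y, {z,x}=−1 with R_t the module twisted by the modular derivation.) -/
open MvPolynomial Finsupp

lemma coeff_pderiv' {k : Type*} [CommRing k] (i : Fin 3) (m : Fin 3 →₀ ℕ)
    (g : MvPolynomial (Fin 3) k) :
    coeff m (pderiv i g) = (m i + 1 : ℕ) * coeff (m + Finsupp.single i 1) g := by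
  induction g using MvPolynomial.induction_on' with
  | monomial s a =>
    rw [pderiv_monomial]
    simp only [coeff_monomial]
    by_cases h : s = m + Finsupp.single i 1
    · subst h
      have h1 : m + Finsupp.single i 1 - Finsupp.single i 1 = m :=
        add_tsub_cancel_right _ _
      have h2 : (m + Finsupp.single i 1 : Fin 3 →₀ ℕ) i = m i + 1 := by simp
      rw [if_pos h1, if_pos rfl, h2]
      push_cast; ring
    · rw [if_neg h]
      by_cases h2 : s - Finsupp.single i 1 = m
      · rw [if_pos h2]
        have hsi : s i = 0 := by
          by_contra hs
          apply h
          refine Finsupp.ext fun j => ?_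
          have := DFunLike.congr_fun h2 j
          rcases eq_or_ne j i with rfl | hj
          · simp [Finsupp.single_apply] at this ⊢
            omega
          · simp [Finsupp.single_apply, hj, Ne.symm hj] at this ⊢
            omega
        simp [hsi]
      · rw [if_neg h2, mul_zero]
  | add p q hp hq => simp [hp, hq, mul_add]

lemma apply_le_degsum (f : Fin 3 →₀ ℕ) (i : Fin 3) :
    f i ≤ f.sum fun _ e => e := by
  rcases eq_or_ne (f i) 0 with h | h
  · simp [h]
  · exact Finset.single_le_sum (fun j _ => Nat.zero_le _)
      (Finsupp.mem_support_iff.mpr h)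

/-- On R = k[x,y,z], the set {g : ∂g/∂z = 0 and ∂g/∂x + y·∂g/∂y = 0}
is exactly the set of constants; this computes PH_3(R,R_t) ≅ k for the Poisson
structure {x,y}=0, {y,z}=y, {z,x}=−1 twisted by the modular derivation. -/
theorem third_twisted_poisson_homology_is_constants
    {k : Type*} [Field k] [CharZero k] :
    {g : MvPolynomial (Fin 3) k |
        pderiv 2 g = 0 ∧ pderiv 0 g + X 1 * pderiv 1 g = 0}
      = Set.range (C : k → MvPolynomial (Fin 3) k) := by
  ext g
  simp only [Set.mem_setOf_eq, Set.mem_range]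
  constructor
  · rintro ⟨h2, h01⟩
    -- key recursion from the second equation
    have key : ∀ m : Fin 3 →₀ ℕ,
        ((m 0 : k) + 1) * coeff (m + Finsupp.single 0 1) g
          + (m 1 : k) * coeff m g = 0 := by
      intro m
      have h := congrArg (coeff m) h01
      rw [coeff_add, coeff_pderiv', coeff_X_mul', coeff_zero] at h
      by_cases hm : (1 : Fin 3) ∈ m.support
      · have hm1 : 1 ≤ m 1 := Nat.one_le_iff_ne_zero.mpr (Finsupp.mem_support_iff.mp hm)
        rw [if_pos hm, coeff_pderiv'] at h
        have e1 : m - Finsupp.single 1 1 + Finsupp.single 1 1 = m :=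
          tsub_add_cancel_of_le (Finsupp.single_le_iff.mpr hm1)
        have e2 : (m - Finsupp.single 1 1 : Fin 3 →₀ ℕ) 1 = m 1 - 1 := by
          simp [Finsupp.tsub_apply]
        rw [e1, e2] at h
        have e3 : ((m 1 - 1 + 1 : ℕ) : k) = (m 1 : k) := by
          rw [Nat.sub_add_cancel hm1]
        rw [e3] at h
        convert h using 2
        push_cast; ring
      · have hm1 : m 1 = 0 := by
          by_contra hh; exact hm (Finsupp.mem_support_iff.mpr hh)
        rw [if_neg hm] at h
        rw [hm1]
        push_cast
        push_cast at h
        linear_combination h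
    -- Step A : if m 1 ≠ 0 then coeff m g = 0
    have stepA : ∀ m : Fin 3 →₀ ℕ, m 1 ≠ 0 → coeff m g = 0 := by
      intro m hm1
      by_contra hc
      have hgrow : ∀ n : ℕ, coeff (m + Finsupp.single 0 n) g ≠ 0 := by
        intro n
        induction n with
        | zero => simpa using hc
        | succ n ih =>
          have hk := key (m + Finsupp.single 0 n)
          have e1 : (m + Finsupp.single 0 n : Fin 3 →₀ ℕ) 1 = m 1 := by
            simp [Finsupp.single_apply]
          have e2 : m + Finsupp.single 0 n + Finsupp.single 0 1
              = m + Finsupp.single 0 (n + 1) := by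
            rw [add_assoc, ← Finsupp.single_add]
          rw [e1, e2] at hk
          intro hzero
          rw [hzero, mul_zero, zero_add] at hk
          have : (m 1 : k) ≠ 0 := Nat.cast_ne_zero.mpr hm1
          exact this ((mul_eq_zero.mp hk).resolve_right ih)
      have hd := hgrow (g.totalDegree + 1)
      have hmem : m + Finsupp.single 0 (g.totalDegree + 1) ∈ g.support :=
        Finsupp.mem_support_iff.mpr hd
      have hle := MvPolynomial.le_totalDegree hmem
      have hge : g.totalDegree + 1
          ≤ (m + Finsupp.single 0 (g.totalDegree + 1)).sum fun _ e => e := by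
        refine le_trans ?_ (apply_le_degsum _ 0)
        simp
      omega
    -- Step B : if m 2 ≠ 0 then coeff m g = 0
    have stepB : ∀ m : Fin 3 →₀ ℕ, m 2 ≠ 0 → coeff m g = 0 := by
      intro m hm2
      have hm2' : 1 ≤ m 2 := Nat.one_le_iff_ne_zero.mpr hm2
      have h := congrArg (coeff (m - Finsupp.single 2 1)) h2
      rw [coeff_pderiv', coeff_zero] at h
      have e1 : m - Finsupp.single 2 1 + Finsupp.single 2 1 = m :=
        tsub_add_cancel_of_le (Finsupp.single_le_iff.mpr hm2')
      rw [e1] at h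
      have hne : ((m - Finsupp.single 2 1 : Fin 3 →₀ ℕ) 2 + 1 : ℕ) ≠ 0 := by omega
      have : (((m - Finsupp.single 2 1 : Fin 3 →₀ ℕ) 2 + 1 : ℕ) : k) ≠ 0 :=
        Nat.cast_ne_zero.mpr hne
      exact (mul_eq_zero.mp h).resolve_left this
    -- Step C : if m 0 ≠ 0 (and m 1 = 0) then coeff m g = 0
    have stepC : ∀ m : Fin 3 →₀ ℕ, m 0 ≠ 0 → coeff m g = 0 := by
      intro m hm0
      rcases eq_or_ne (m 1) 0 with hm1 | hm1
      · have hm0' : 1 ≤ m 0 := Nat.one_le_iff_ne_zero.mpr hm0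
        have hk := key (m - Finsupp.single 0 1)
        have e1 : m - Finsupp.single 0 1 + Finsupp.single 0 1 = m :=
          tsub_add_cancel_of_le (Finsupp.single_le_iff.mpr hm0')
        have e2 : (m - Finsupp.single 0 1 : Fin 3 →₀ ℕ) 1 = m 1 := by
          simp [Finsupp.tsub_apply, Finsupp.single_apply]
        rw [e1, e2, hm1] at hk
        simp only [Nat.cast_zero, zero_mul, add_zero] at hk
        have hne : ((m - Finsupp.single 0 1 : Fin 3 →₀ ℕ) 0 : k) + 1 ≠ 0 := by
          have : (((m - Finsupp.single 0 1 : Fin 3 →₀ ℕ) 0 + 1 : ℕ) : k) ≠ 0 :=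
            Nat.cast_ne_zero.mpr (by omega)
          push_cast at this
          exact this
        exact (mul_eq_zero.mp hk).resolve_left hne
      · exact stepA m hm1
    refine ⟨coeff 0 g, ?_⟩
    ext n
    rw [coeff_C]
    by_cases hn : n = 0
    · rw [if_pos hn.symm, hn]
    · rw [if_neg (Ne.symm hn)]
      have : ∃ i, n i ≠ 0 := by
        by_contra hall
        push_neg at hall
        exact hn (Finsupp.ext fun j => hall j)
      obtain ⟨i, hi⟩ := this
      fin_cases i
      · exact (stepC n hi).symm
      · exact (stepA n hi).symm
      · exact (stepB n hi).symm
  · rintro ⟨c, rfl⟩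
    simp
end
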